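/- arXiv:2210.04129 — 2 statements merged into one kernel-verified Lean document; each statement's English description precedes it below -/
import Mathlib

section
/- Let f : [0,T) → [0,∞) be continuous, differentiable on (0,T), with f(0) = 0 and f'(t) ≤ d²/√(T−t) + (2M/√(T−t))·f(t) for all t ∈ (0,T), where d, M > 0 are constants. Then f(t) ≤ d² · (exp(4M(√T − √(T−t))) − 1)/(2M) for all t ∈ [0,T). -/
theorem gronwall_singular_kernel (T d M : ℝ) (hT : 0 < T) (hd : 0 < d) (hM : 0 < M)
    (f f' : ℝ → ℝ)
    (hf_cont : ContinuousOn f (Set.Ico 0 T))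
    (hf_nonneg : ∀ t ∈ Set.Ico (0 : ℝ) T, 0 ≤ f t)
    (hf_deriv : ∀ t ∈ Set.Ioo (0 : ℝ) T, HasDerivAt f (f' t) t)
    (hf0 : f 0 = 0)
    (hf'_bound : ∀ t ∈ Set.Ioo (0 : ℝ) T,
      f' t ≤ d ^ 2 / Real.sqrt (T - t) + (2 * M / Real.sqrt (T - t)) * f t) :
    ∀ t ∈ Set.Ico (0 : ℝ) T,
      f t ≤ d ^ 2 * (Real.exp (4 * M * (Real.sqrt T - Real.sqrt (T - t))) - 1) / (2 * M) := by
  intro t ht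
  obtain ⟨ht0, htT⟩ := ht
  set φ : ℝ → ℝ := fun s => Real.exp (-(4 * M * (Real.sqrt T - Real.sqrt (T - s)))) with hφdef
  set ψ : ℝ → ℝ := fun s => (f s + d ^ 2 / (2 * M)) * φ s with hψdef
  have hφpos : ∀ s, 0 < φ s := fun s => Real.exp_pos _
  have hφderiv : ∀ s ∈ Set.Ioo (0:ℝ) T,
      HasDerivAt φ (-(2 * M / Real.sqrt (T - s)) * φ s) s := by
    intro s hs
    have hTs : 0 < T - s := by linarith [hs.2]
    have hsq : 0 < Real.sqrt (T - s) := Real.sqrt_pos.mpr hTs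
    have h1 : HasDerivAt (fun x : ℝ => T - x) (-1) s := by
      simpa using (hasDerivAt_id s).const_sub T
    have h2 : HasDerivAt (fun x : ℝ => Real.sqrt (T - x))
        (1 / (2 * Real.sqrt (T - s)) * (-1)) s :=
      (Real.hasDerivAt_sqrt hTs.ne').comp s h1
    have h3 : HasDerivAt (fun x : ℝ => -(4 * M * (Real.sqrt T - Real.sqrt (T - x))))
        (-(2 * M / Real.sqrt (T - s))) s := by
      have h := ((h2.const_sub (Real.sqrt T)).const_mul (4 * M)).neg
      refine h.congr_deriv ?_
      field_simp
      ring
    simpa [hφdef, mul_comm] using h3.exp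
  have hψderiv : ∀ s ∈ Set.Ioo (0:ℝ) T, HasDerivAt ψ
      ((f' s - (2 * M / Real.sqrt (T - s)) * f s - d ^ 2 / Real.sqrt (T - s)) * φ s) s := by
    intro s hs
    have hTs : 0 < T - s := by linarith [hs.2]
    have hsq : 0 < Real.sqrt (T - s) := Real.sqrt_pos.mpr hTs
    have h1 : HasDerivAt (fun x => f x + d ^ 2 / (2 * M)) (f' s) s :=
      (hf_deriv s hs).add_const _
    have h2 := h1.mul (hφderiv s hs)
    refine h2.congr_deriv ?_
    field_simp
    ring
  have hψnonpos : ∀ s ∈ Set.Ioo (0:ℝ) T, deriv ψ s ≤ 0 := by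
    intro s hs
    rw [(hψderiv s hs).deriv]
    have hTs : 0 < T - s := by linarith [hs.2]
    have hb := hf'_bound s hs
    have : f' s - (2 * M / Real.sqrt (T - s)) * f s - d ^ 2 / Real.sqrt (T - s) ≤ 0 := by
      linarith
    exact mul_nonpos_of_nonpos_of_nonneg this (hφpos s).le
  have hφcont : Continuous φ := by
    apply Real.continuous_exp.comp
    exact (continuous_const.mul (continuous_const.sub (Real.continuous_sqrt.comp
      (continuous_const.sub continuous_id)))).neg
  have hψcont : ContinuousOn ψ (Set.Icc 0 t) := by
    apply ContinuousOn.mul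
    · exact ((hf_cont.mono (Set.Icc_subset_Ico_right htT)).add continuousOn_const)
    · exact hφcont.continuousOn
  have hanti : AntitoneOn ψ (Set.Icc 0 t) := by
    apply antitoneOn_of_deriv_nonpos (convex_Icc 0 t) hψcont
    · intro s hs
      rw [interior_Icc] at hs
      exact (hψderiv s ⟨hs.1, lt_of_lt_of_le hs.2 htT.le⟩).differentiableAt.differentiableWithinAt
    · intro s hs
      rw [interior_Icc] at hs
      exact hψnonpos s ⟨hs.1, lt_of_lt_of_le hs.2 htT.le⟩
  have key : ψ t ≤ ψ 0 :=
    hanti (Set.left_mem_Icc.mpr ht0) (Set.right_mem_Icc.mpr ht0) ht0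
  have hψ0 : ψ 0 = d ^ 2 / (2 * M) := by
    simp [hψdef, hφdef, hf0]
  have hφt : φ t = Real.exp (-(4 * M * (Real.sqrt T - Real.sqrt (T - t)))) := rfl
  have hψt : ψ t = (f t + d ^ 2 / (2 * M)) * φ t := rfl
  rw [hψt, hψ0] at key
  have hinv : (φ t)⁻¹ = Real.exp (4 * M * (Real.sqrt T - Real.sqrt (T - t))) := by
    rw [hφt, ← Real.exp_neg, neg_neg]
  rw [← le_div_iff₀ (hφpos t)] at key
  rw [div_eq_mul_inv (d ^ 2 / (2 * M)) (φ t), hinv] at key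
  have heq : d ^ 2 * (Real.exp (4 * M * (Real.sqrt T - Real.sqrt (T - t))) - 1) / (2 * M)
      = d ^ 2 / (2 * M) * Real.exp (4 * M * (Real.sqrt T - Real.sqrt (T - t))) - d ^ 2 / (2 * M) := by
    field_simp
  rw [heq]
  linarith
end

section
/- Let B be a standard d-dimensional Brownian motion, τ ≥ 0, x ∈ ℝ^d, and X_s = B_s − B_τ + x for s ≥ τ. Then for α ≥ 0, β > 0 and t > s > τ, the moment I = E[(|y−X_s|/(t−s))^{αβ} G_{t−s}(y−X_s)^β] equals C₁ · t₁^{−(d(β−1)/2 + αβ)} · G_{t₁+t₂}(y−x) · ∫_{ℝ^d} |√(t₁t₂/(t₁+t₂)) z + t₁(x−y)/(t₁+t₂)|^{αβ} G₁(z) dz, where t₁ = β^{−1}(t−s), t₂ = s−τ, and C₁ = (2π)^{−d(β−1)/2} β^{−(d/2+α)β}. -/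
open Real MeasureTheory

open scoped RealInnerProductSpace NNReal ENNReal

noncomputable def G (d : ℕ) (t : ℝ) (x : EuclideanSpace ℝ (Fin d)) : ℝ :=
  (2 * π * t) ^ (-(d : ℝ) / 2) * Real.exp (-‖x‖ ^ 2 / (2 * t))

lemma G_pos {d : ℕ} {t : ℝ} (ht : 0 < t) (z : EuclideanSpace ℝ (Fin d)) : 0 < G d t z :=
  mul_pos (Real.rpow_pos_of_pos (by positivity) _) (Real.exp_pos _)

lemma G_continuous (d : ℕ) (t : ℝ) : Continuous (G d t) := by
  unfold G
  exact continuous_const.mul (Real.continuous_exp.comp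
    (((continuous_norm.pow 2).neg).div_const _))

lemma pow_identity (d : ℕ) {α β u : ℝ} (hα : 0 ≤ α) (hβ : 0 < β) (hu : 0 < u)
    (w : EuclideanSpace ℝ (Fin d)) :
    (‖w‖ / (β * u)) ^ (α * β) * (G d (β * u) w) ^ β =
      ((2 * π) ^ (-(d : ℝ) * (β - 1) / 2) * β ^ (-((d : ℝ) / 2 + α) * β)) *
        u ^ (-((d : ℝ) * (β - 1) / 2 + α * β)) * (‖w‖ ^ (α * β) * G d u w) := by
  have h2π : (0:ℝ) < 2 * π := by positivity
  have hβu : (0:ℝ) < β * u := mul_pos hβ hu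
  have hb : (0:ℝ) < 2 * π * (β * u) := by positivity
  have hbu : (0:ℝ) < 2 * π * u := by positivity
  unfold G
  rw [div_rpow (norm_nonneg w) hβu.le,
    mul_rpow (Real.rpow_nonneg hb.le _) (Real.exp_pos _).le,
    ← Real.rpow_mul hb.le, ← Real.exp_mul]
  have hexp : -‖w‖ ^ 2 / (2 * (β * u)) * β = -‖w‖ ^ 2 / (2 * u) := by
    field_simp
  rw [hexp, div_eq_mul_inv, ← Real.rpow_neg hβu.le]
  have hconst : (β * u) ^ (-(α * β)) * (2 * π * (β * u)) ^ (-(d : ℝ) / 2 * β) =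
      ((2 * π) ^ (-(d : ℝ) * (β - 1) / 2) * β ^ (-((d : ℝ) / 2 + α) * β)) *
        u ^ (-((d : ℝ) * (β - 1) / 2 + α * β)) * (2 * π * u) ^ (-(d : ℝ) / 2) := by
    have hl : (0:ℝ) < (β * u) ^ (-(α * β)) * (2 * π * (β * u)) ^ (-(d : ℝ) / 2 * β) := by
      positivity
    have hr : (0:ℝ) < ((2 * π) ^ (-(d : ℝ) * (β - 1) / 2) * β ^ (-((d : ℝ) / 2 + α) * β)) *
        u ^ (-((d : ℝ) * (β - 1) / 2 + α * β)) * (2 * π * u) ^ (-(d : ℝ) / 2) := by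
      positivity
    rw [← Real.exp_log hl, ← Real.exp_log hr]
    congr 1
    rw [Real.log_mul (Real.rpow_pos_of_pos hβu _).ne' (Real.rpow_pos_of_pos hb _).ne',
      Real.log_mul
        (mul_pos (mul_pos (Real.rpow_pos_of_pos h2π _) (Real.rpow_pos_of_pos hβ _))
          (Real.rpow_pos_of_pos hu _)).ne' (Real.rpow_pos_of_pos hbu _).ne',
      Real.log_mul
        (mul_pos (Real.rpow_pos_of_pos h2π _) (Real.rpow_pos_of_pos hβ _)).ne'
        (Real.rpow_pos_of_pos hu _).ne',
      Real.log_mul (Real.rpow_pos_of_pos h2π _).ne' (Real.rpow_pos_of_pos hβ _).ne',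
      Real.log_rpow hβu, Real.log_rpow hb, Real.log_rpow h2π, Real.log_rpow hβ,
      Real.log_rpow hu, Real.log_rpow hbu,
      Real.log_mul h2π.ne' hβu.ne', Real.log_mul h2π.ne' hu.ne',
      Real.log_mul hβ.ne' hu.ne']
    ring
  calc ‖w‖ ^ (α * β) * ((β * u) ^ (-(α * β))) *
        ((2 * π * (β * u)) ^ (-(d : ℝ) / 2 * β) * Real.exp (-‖w‖ ^ 2 / (2 * u))) =
      ((β * u) ^ (-(α * β)) * (2 * π * (β * u)) ^ (-(d : ℝ) / 2 * β)) *
        (‖w‖ ^ (α * β) * Real.exp (-‖w‖ ^ 2 / (2 * u))) := by ring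
    _ = _ := by rw [hconst]; ring

lemma gaussian_product (d : ℕ) {t₁ t₂ : ℝ} (h1 : 0 < t₁) (h2 : 0 < t₂)
    (x y z : EuclideanSpace ℝ (Fin d)) :
    G d t₁ (y - z) * G d t₂ (z - x) =
      G d (t₁ * t₂ / (t₁ + t₂)) (z - (t₁ + t₂)⁻¹ • (t₁ • x + t₂ • y)) *
        G d (t₁ + t₂) (y - x) := by
  have hT : 0 < t₁ + t₂ := by linarith
  have hc : 0 < t₁ * t₂ / (t₁ + t₂) := by positivity
  have hpre : ((2 * π * t₁ : ℝ) ^ (-(d:ℝ)/2)) * ((2 * π * t₂ : ℝ) ^ (-(d:ℝ)/2)) =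
      ((2 * π * (t₁ * t₂ / (t₁ + t₂)) : ℝ) ^ (-(d:ℝ)/2)) *
        ((2 * π * (t₁ + t₂) : ℝ) ^ (-(d:ℝ)/2)) := by
    rw [← Real.mul_rpow (by positivity) (by positivity),
        ← Real.mul_rpow (by positivity) (by positivity)]
    congr 1
    field_simp
  have hm : z - (t₁ + t₂)⁻¹ • (t₁ • x + t₂ • y)
      = (t₁/(t₁+t₂)) • (z - x) + (t₂/(t₁+t₂)) • (z - y) := by
    match_scalars <;> field_simp
  have hyx : y - x = (z - x) - (z - y) := by abel
  have e1 : ‖(t₁/(t₁+t₂)) • (z - x) + (t₂/(t₁+t₂)) • (z - y)‖ ^ 2 =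
      (t₁/(t₁+t₂))^2 * ‖z - x‖^2 +
        2 * ((t₁/(t₁+t₂)) * ((t₂/(t₁+t₂)) * ⟪z - x, z - y⟫)) +
          (t₂/(t₁+t₂))^2 * ‖z - y‖^2 := by
    rw [norm_add_sq_real, norm_smul, norm_smul, real_inner_smul_left, real_inner_smul_right,
      mul_pow, mul_pow, Real.norm_eq_abs, Real.norm_eq_abs, sq_abs, sq_abs]
  have e2 : ‖(z - x) - (z - y)‖^2 = ‖z - x‖^2 - 2 * ⟪z - x, z - y⟫ + ‖z - y‖^2 :=
    norm_sub_sq_real _ _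
  have e3 : ‖y - z‖ = ‖z - y‖ := norm_sub_rev _ _
  have hexp : Real.exp (-‖y - z‖ ^ 2 / (2 * t₁)) * Real.exp (-‖z - x‖ ^ 2 / (2 * t₂)) =
      Real.exp (-‖z - (t₁ + t₂)⁻¹ • (t₁ • x + t₂ • y)‖ ^ 2 / (2 * (t₁ * t₂ / (t₁ + t₂)))) *
        Real.exp (-‖y - x‖ ^ 2 / (2 * (t₁ + t₂))) := by
    rw [← Real.exp_add, ← Real.exp_add]
    congr 1
    rw [hm, hyx, e1, e2, e3]
    field_simp
    ring
  unfold G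
  calc ((2 * π * t₁) ^ (-(d:ℝ)/2) * Real.exp (-‖y - z‖ ^ 2 / (2 * t₁))) *
        ((2 * π * t₂) ^ (-(d:ℝ)/2) * Real.exp (-‖z - x‖ ^ 2 / (2 * t₂))) =
      (((2 * π * t₁ : ℝ) ^ (-(d:ℝ)/2)) * ((2 * π * t₂ : ℝ) ^ (-(d:ℝ)/2))) *
        (Real.exp (-‖y - z‖ ^ 2 / (2 * t₁)) * Real.exp (-‖z - x‖ ^ 2 / (2 * t₂))) := by ring
    _ = _ := by rw [hpre, hexp]; ring

lemma gaussian_cov (d : ℕ) {c : ℝ} (hc : 0 < c) (p : ℝ)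
    (y m : EuclideanSpace ℝ (Fin d)) :
    ∫ z : EuclideanSpace ℝ (Fin d), ‖y - z‖ ^ p * G d c (z - m) =
      ∫ u : EuclideanSpace ℝ (Fin d), ‖Real.sqrt c • u + (m - y)‖ ^ p * G d 1 u := by
  have hs : 0 < Real.sqrt c := Real.sqrt_pos.2 hc
  set g : EuclideanSpace ℝ (Fin d) → ℝ := fun w => ‖(y - m) - w‖ ^ p * G d c w with hgdef
  have step1 : ∫ z : EuclideanSpace ℝ (Fin d), ‖y - z‖ ^ p * G d c (z - m) =
      ∫ w : EuclideanSpace ℝ (Fin d), g w := by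
    rw [← integral_add_right_eq_self (fun z : EuclideanSpace ℝ (Fin d) =>
      ‖y - z‖ ^ p * G d c (z - m)) m]
    congr 1
    funext w
    rw [hgdef]
    simp only
    rw [add_sub_cancel_right, show y - (w + m) = y - m - w by abel]
  have step2 := Measure.integral_comp_smul_of_nonneg
    (volume : Measure (EuclideanSpace ℝ (Fin d))) g (Real.sqrt c) (hR := hs.le)
  rw [finrank_euclideanSpace_fin] at step2
  have hg : ∀ u : EuclideanSpace ℝ (Fin d), g (Real.sqrt c • u) =
      c ^ (-(d:ℝ)/2) * (‖Real.sqrt c • u + (m - y)‖ ^ p * G d 1 u) := by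
    intro u
    have hnrm : ‖Real.sqrt c • u‖ ^ 2 = c * ‖u‖ ^ 2 := by
      rw [norm_smul, mul_pow, Real.norm_eq_abs, sq_abs, Real.sq_sqrt hc.le]
    have hv : (y - m) - Real.sqrt c • u = -(Real.sqrt c • u + (m - y)) := by
      module
    rw [hgdef]
    simp only
    rw [hv, norm_neg]
    unfold G
    rw [hnrm]
    have hc2 : -(c * ‖u‖ ^ 2) / (2 * c) = -‖u‖ ^ 2 / (2 * 1) := by
      field_simp
    have hpref : (2 * π * c : ℝ) ^ (-(d:ℝ)/2) = c ^ (-(d:ℝ)/2) * (2 * π * 1 : ℝ) ^ (-(d:ℝ)/2) := by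
      rw [mul_one, show (2 * π * c : ℝ) = c * (2 * π) by ring,
        Real.mul_rpow hc.le (by positivity)]
    rw [hc2, hpref]
    ring
  have hpow : (Real.sqrt c) ^ d = c ^ ((d:ℝ)/2) := by
    rw [Real.sqrt_eq_rpow, ← Real.rpow_natCast (c ^ (1/2 : ℝ)) d, ← Real.rpow_mul hc.le]
    congr 1
    ring
  have step3 : ∫ w : EuclideanSpace ℝ (Fin d), g w =
      (Real.sqrt c) ^ d • ∫ u : EuclideanSpace ℝ (Fin d), g (Real.sqrt c • u) := by
    rw [step2, smul_smul, mul_inv_cancel₀ (pow_ne_zero d hs.ne'), one_smul]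
  rw [step1, step3]
  simp only [hg]
  rw [integral_const_mul, smul_eq_mul, hpow, ← mul_assoc, ← Real.rpow_add hc,
    show (d:ℝ)/2 + -(d:ℝ)/2 = 0 by ring, Real.rpow_zero, one_mul]

/-- The Gaussian moment computation (Lemma 3.2): `X` plays the role of
`X_s = B_s - B_τ + x` for a standard Brownian motion `B`, so that its law has
density `G_{s-τ}(· - x)` with respect to Lebesgue measure. -/
theorem gaussian_moment_formula (d : ℕ) (α β τ s t : ℝ) (hα : 0 ≤ α) (hβ : 0 < β)
    (hτ : 0 ≤ τ) (hτs : τ < s) (hst : s < t)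
    (x y : EuclideanSpace ℝ (Fin d))
    {Ω : Type*} [MeasureSpace Ω] (P : Measure Ω) [IsProbabilityMeasure P]
    (X : Ω → EuclideanSpace ℝ (Fin d)) (hX : Measurable X)
    (hlaw : Measure.map X P =
      volume.withDensity (fun z => ENNReal.ofReal (G d (s - τ) (z - x)))) :
    (∫ ω, (‖y - X ω‖ / (t - s)) ^ (α * β) * (G d (t - s) (y - X ω)) ^ β ∂P) =
      ((2 * π) ^ (-(d : ℝ) * (β - 1) / 2) * β ^ (-((d : ℝ) / 2 + α) * β)) *
        (β⁻¹ * (t - s)) ^ (-((d : ℝ) * (β - 1) / 2 + α * β)) *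
          G d (β⁻¹ * (t - s) + (s - τ)) (y - x) *
            ∫ z : EuclideanSpace ℝ (Fin d),
              ‖Real.sqrt ((β⁻¹ * (t - s)) * (s - τ) / (β⁻¹ * (t - s) + (s - τ))) • z +
                  ((β⁻¹ * (t - s)) / (β⁻¹ * (t - s) + (s - τ))) • (x - y)‖ ^ (α * β) *
                G d 1 z := by
  have hts : 0 < t - s := sub_pos.2 hst
  have ht2 : 0 < s - τ := sub_pos.2 hτs
  have ht1 : 0 < β⁻¹ * (t - s) := by positivity
  set t₁ := β⁻¹ * (t - s) with ht₁def
  set t₂ := s - τ with ht₂def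
  have hT : 0 < t₁ + t₂ := by linarith
  have hβt : t - s = β * t₁ := by rw [ht₁def]; field_simp
  set c := t₁ * t₂ / (t₁ + t₂) with hcdef
  have hc : 0 < c := by positivity
  set m := (t₁ + t₂)⁻¹ • (t₁ • x + t₂ • y) with hmdef
  set C := ((2 * π) ^ (-(d : ℝ) * (β - 1) / 2) * β ^ (-((d : ℝ) / 2 + α) * β)) *
      t₁ ^ (-((d : ℝ) * (β - 1) / 2 + α * β)) with hCdef
  have hp : 0 ≤ α * β := mul_nonneg hα hβ.le
  set F : EuclideanSpace ℝ (Fin d) → ℝ :=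
    fun z => (‖y - z‖ / (t - s)) ^ (α * β) * (G d (t - s) (y - z)) ^ β with hFdef
  have hFc : Continuous F := by
    apply Continuous.mul
    · exact (((continuous_const.sub continuous_id).norm).div_const (t - s)).rpow_const
        (fun z => Or.inr hp)
    · exact (Continuous.rpow_const
        ((G_continuous d (t - s)).comp (continuous_const.sub continuous_id))
        (fun z => Or.inl (G_pos hts (y - z)).ne'))
  have hGmeas : Measurable fun z : EuclideanSpace ℝ (Fin d) => (G d t₂ (z - x)).toNNReal :=
    measurable_real_toNNReal.comp
      (((G_continuous d t₂).comp (continuous_id.sub continuous_const)).measurable)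
  have hmy : m - y = (t₁ / (t₁ + t₂)) • (x - y) := by
    rw [hmdef]
    match_scalars <;> field_simp <;> ring
  have key : ∀ z : EuclideanSpace ℝ (Fin d),
      ((G d t₂ (z - x)).toNNReal : ℝ≥0) • F z =
        (C * G d (t₁ + t₂) (y - x)) * (‖y - z‖ ^ (α * β) * G d c (z - m)) := by
    intro z
    have hcoe : (((G d t₂ (z - x)).toNNReal : ℝ≥0) : ℝ) = G d t₂ (z - x) :=
      Real.coe_toNNReal _ (G_pos ht2 _).le
    rw [NNReal.smul_def, smul_eq_mul, hcoe, hFdef]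
    simp only
    rw [hβt, pow_identity d hα hβ ht1 (y - z), hCdef]
    have hprod := gaussian_product d ht1 ht2 x y z
    rw [hcdef, hmdef]
    linear_combination (((2 * π) ^ (-(d : ℝ) * (β - 1) / 2) * β ^ (-((d : ℝ) / 2 + α) * β)) *
      t₁ ^ (-((d : ℝ) * (β - 1) / 2 + α * β)) * ‖y - z‖ ^ (α * β)) * hprod
  calc (∫ ω, (‖y - X ω‖ / (t - s)) ^ (α * β) * (G d (t - s) (y - X ω)) ^ β ∂P)
      = ∫ z, F z ∂(Measure.map X P) :=
        (integral_map hX.aemeasurable hFc.aestronglyMeasurable).symm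
    _ = ∫ z, ((G d t₂ (z - x)).toNNReal : ℝ≥0) • F z := by
        rw [hlaw]
        exact integral_withDensity_eq_integral_smul hGmeas F
    _ = ∫ z, (C * G d (t₁ + t₂) (y - x)) * (‖y - z‖ ^ (α * β) * G d c (z - m)) := by
        simp only [key]
    _ = (C * G d (t₁ + t₂) (y - x)) * ∫ z, ‖y - z‖ ^ (α * β) * G d c (z - m) :=
        integral_const_mul _ _
    _ = (C * G d (t₁ + t₂) (y - x)) *
          ∫ u, ‖Real.sqrt c • u + (m - y)‖ ^ (α * β) * G d 1 u := by
        rw [gaussian_cov d hc (α * β) y m]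
    _ = _ := by rw [hmy]
end
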